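/- Let h : ℝ → ℝ be a bounded continuous function, let v > 0 be a fixed variance, and define F(μ) = ∫ h(x) dN(μ, v)(x), where N(μ, v) is the Gaussian measure on ℝ with mean μ and variance v. Then for every μ ∈ ℝ, F is differentiable at μ with F′(μ) = ∫ h(x) · (x − μ)/v dN(μ, v)(x). -/

import Mathlib

open MeasureTheory ProbabilityTheory Real

lemma integral_gaussianReal_eq' (f : ℝ → ℝ) (m : ℝ) (v : NNReal) (hv : v ≠ 0) :
    ∫ x, f x ∂(gaussianReal m v) = ∫ x, f x * gaussianPDFReal m v x := by
  rw [gaussianReal_of_var_ne_zero _ hv, gaussianPDF_def]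
  have : (fun x => ENNReal.ofReal (gaussianPDFReal m v x))
      = fun x => ((gaussianPDFReal m v x).toNNReal : ENNReal) := rfl
  rw [this, integral_withDensity_eq_integral_smul
    ((measurable_gaussianPDFReal m v).real_toNNReal) f]
  refine integral_congr_ae (Filter.Eventually.of_forall fun x => ?_)
  simp [NNReal.smul_def, Real.coe_toNNReal _ (gaussianPDFReal_nonneg m v x), mul_comm]

lemma hasDerivAt_gaussianPDFReal (v : NNReal) (hv : (0:ℝ) < v) (x m : ℝ) :
    HasDerivAt (fun m => gaussianPDFReal m v x)
      (gaussianPDFReal m v x * ((x - m) / v)) m := by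
  have h1 : HasDerivAt (fun m : ℝ => x - m) (-1) m := (hasDerivAt_id m).const_sub x
  have h0 : HasDerivAt (fun m : ℝ => -(x - m)^2/(2*(v:ℝ))) ((x - m)/v) m := by
    have h2 := (h1.pow 2).neg.div_const (2*(v:ℝ))
    refine h2.congr_deriv ?_
    field_simp
    ring
  have h3 := (h0.exp).const_mul (√(2 * π * (v:ℝ)))⁻¹
  have : gaussianPDFReal m v x * ((x - m) / v)
      = (√(2 * π * (v:ℝ)))⁻¹ * (rexp (-(x - m)^2/(2*(v:ℝ))) * ((x - m)/v)) := by
    simp only [gaussianPDFReal]; ring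
  rw [this]
  exact h3

/-- differentiability of `μ ↦ ∫ h dN(μ, v)` for bounded
continuous `h`, with derivative given by the score-function identity. -/
theorem stmt_16 (h : ℝ → ℝ) (hc : Continuous h) (hb : ∃ C, ∀ x, |h x| ≤ C)
    (v : NNReal) (hv : 0 < v) (μ : ℝ) :
    HasDerivAt (fun m : ℝ => ∫ x, h x ∂(gaussianReal m v))
      (∫ x, h x * ((x - μ) / (v : ℝ)) ∂(gaussianReal μ v)) μ := by
  obtain ⟨C, hC⟩ := hb
  have hC0 : (0:ℝ) ≤ C := (abs_nonneg _).trans (hC 0)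
  have hv0 : (0:ℝ) < v := hv
  have hvne : v ≠ 0 := hv.ne'
  set c : ℝ := (√(2 * π * (v:ℝ)))⁻¹ with hc_def
  have hc0 : 0 < c := by
    rw [hc_def]
    positivity
  -- the parametric family and its derivative
  set F : ℝ → ℝ → ℝ := fun m x => h x * gaussianPDFReal m v x with hF_def
  set F' : ℝ → ℝ → ℝ := fun m x => h x * (gaussianPDFReal m v x * ((x - m) / v))
    with hF'_def
  set bound : ℝ → ℝ :=
    fun x => C * c * rexp (1/(2*(v:ℝ))) *
      ((|x - μ| + 1) * rexp (-(1/(4*(v:ℝ))) * (x - μ)^2)) / v with hbound_def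
  have hmeas : ∀ m : ℝ, AEStronglyMeasurable (F m) volume := fun m =>
    (hc.measurable.mul (measurable_gaussianPDFReal m v)).aestronglyMeasurable
  have hFint : Integrable (F μ) volume :=
    (integrable_gaussianPDFReal μ v).bdd_mul hc.aestronglyMeasurable (Filter.Eventually.of_forall fun x => hC x)
  have hF'meas : AEStronglyMeasurable (F' μ) volume :=
    (hc.measurable.mul ((measurable_gaussianPDFReal μ v).mul
      ((measurable_id.sub_const μ).div_const _))).aestronglyMeasurable
  have hbound_int : Integrable bound volume := by
    have hb4 : (0:ℝ) < 1/(4*(v:ℝ)) := by positivity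
    have h1 : Integrable (fun y : ℝ => |y| * rexp (-(1/(4*(v:ℝ))) * y^2)) := by
      have := (integrable_mul_exp_neg_mul_sq hb4).abs
      refine this.congr (Filter.Eventually.of_forall fun y => ?_)
      simp [abs_mul, abs_of_nonneg (exp_pos _).le]
    have h2 : Integrable (fun y : ℝ => (|y| + 1) * rexp (-(1/(4*(v:ℝ))) * y^2)) := by
      have := h1.add (integrable_exp_neg_mul_sq hb4)
      refine this.congr (Filter.Eventually.of_forall fun y => ?_)
      simp only [Pi.add_apply]
      ring
    have h3 := (h2.comp_sub_right μ).const_mul (C * c * rexp (1/(2*(v:ℝ))))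
    refine (h3.div_const (v:ℝ)).congr (Filter.Eventually.of_forall fun x => ?_)
    simp [hbound_def]
  have h_bound : ∀ᵐ x ∂(volume : Measure ℝ), ∀ m ∈ Metric.ball μ 1,
      ‖F' m x‖ ≤ bound x := by
    refine Filter.Eventually.of_forall fun x => fun m hm => ?_
    have hm1 : |m - μ| < 1 := by simpa [Real.dist_eq] using hm
    have hpdf_nonneg := gaussianPDFReal_nonneg m v x
    -- key quadratic inequality
    have hkey : (x - μ)^2/2 - 1 ≤ (x - m)^2 := by
      have hm2 : (m - μ)^2 ≤ 1 := by
        nlinarith [abs_nonneg (m - μ), sq_abs (m - μ)]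
      nlinarith [sq_nonneg ((x - m) - (m - μ))]
    have hexp : rexp (-(x - m)^2/(2*(v:ℝ)))
        ≤ rexp (1/(2*(v:ℝ))) * rexp (-(1/(4*(v:ℝ))) * (x - μ)^2) := by
      rw [← Real.exp_add]
      apply Real.exp_le_exp.mpr
      rw [div_le_iff₀ (by positivity : (0:ℝ) < 2*(v:ℝ))]
      have e : (1/(2*(v:ℝ)) + -(1/(4*(v:ℝ))) * (x - μ)^2) * (2*(v:ℝ))
          = 1 - (x - μ)^2/2 := by field_simp; ring
      rw [e]; linarith
    have hpdf_le : gaussianPDFReal m v x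
        ≤ c * (rexp (1/(2*(v:ℝ))) * rexp (-(1/(4*(v:ℝ))) * (x - μ)^2)) := by
      simp only [gaussianPDFReal]
      exact mul_le_mul_of_nonneg_left hexp hc0.le
    have hxm : |x - m| ≤ |x - μ| + 1 := by
      have : |x - m| ≤ |x - μ| + |μ - m| := by
        calc |x - m| = |(x - μ) + (μ - m)| := by ring_nf
        _ ≤ |x - μ| + |μ - m| := abs_add_le _ _
      have h4 : |μ - m| ≤ 1 := by rw [abs_sub_comm]; exact hm1.le
      linarith
    have hnorm : ‖F' m x‖ = |h x| * (gaussianPDFReal m v x * (|x - m| / v)) := by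
      simp only [hF'_def, Real.norm_eq_abs, abs_mul, abs_div,
        abs_of_nonneg hpdf_nonneg, abs_of_nonneg (NNReal.coe_nonneg v)]
    rw [hnorm, hbound_def]
    have step1 : gaussianPDFReal m v x * (|x - m| / v)
        ≤ (c * (rexp (1/(2*(v:ℝ))) * rexp (-(1/(4*(v:ℝ))) * (x - μ)^2)))
          * ((|x - μ| + 1) / v) := by
      apply mul_le_mul hpdf_le _ (by positivity) (by positivity)
      gcongr
    calc |h x| * (gaussianPDFReal m v x * (|x - m| / v))
        ≤ C * ((c * (rexp (1/(2*(v:ℝ))) * rexp (-(1/(4*(v:ℝ))) * (x - μ)^2)))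
          * ((|x - μ| + 1) / v)) := by
          apply mul_le_mul (hC x) step1 (by positivity) hC0
      _ = C * c * rexp (1/(2*(v:ℝ))) *
          ((|x - μ| + 1) * rexp (-(1/(4*(v:ℝ))) * (x - μ)^2)) / v := by ring
  have h_diff : ∀ᵐ x ∂(volume : Measure ℝ), ∀ m ∈ Metric.ball μ 1,
      HasDerivAt (fun m => F m x) (F' m x) m :=
    Filter.Eventually.of_forall fun x m _ =>
      (hasDerivAt_gaussianPDFReal v hv0 x m).const_mul (h x)
  have main := hasDerivAt_integral_of_dominated_loc_of_deriv_le (Metric.ball_mem_nhds μ one_pos)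
    (Filter.Eventually.of_forall hmeas) hFint hF'meas h_bound hbound_int h_diff
  have heq : (fun m : ℝ => ∫ x, h x ∂(gaussianReal m v)) = fun m => ∫ x, F m x := by
    funext m
    rw [integral_gaussianReal_eq' h m v hvne]
  have heq2 : (∫ x, h x * ((x - μ) / (v : ℝ)) ∂(gaussianReal μ v)) = ∫ x, F' μ x := by
    rw [integral_gaussianReal_eq' _ μ v hvne]
    refine integral_congr_ae (Filter.Eventually.of_forall fun x => ?_)
    simp only [hF'_def]
    ring
  rw [heq, heq2]
  exact main.2
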